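/- arXiv:1503.02347 — 3 statements merged into one kernel-verified Lean document; each statement's English description precedes it below -/
import Mathlib

section
/- The subalgebra F of functions on G† is closed under the convolution coproduct: for every f ∈ F, the function on G† × G† given by (ψ₁, ψ₂) ↦ f(ψ₁ ∘ ψ₂) belongs to the ℝ-subalgebra of functions on G† × G† generated by the functions (ψ₁, ψ₂) ↦ g(ψ₁)·h(ψ₂) with g, h ∈ F. -/
/-- A `C^∞` diffeomorphism of `ℝⁿ` (modeled as `Fin n → ℝ`). -/
structure Diffeo (n : ℕ) where
  toFun : (Fin n → ℝ) → (Fin n → ℝ)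
  invFun : (Fin n → ℝ) → (Fin n → ℝ)
  smooth : ContDiff ℝ (⊤ : ℕ∞) toFun
  smooth_inv : ContDiff ℝ (⊤ : ℕ∞) invFun
  left_inv : Function.LeftInverse invFun toFun
  right_inv : Function.RightInverse invFun toFun

/-- Composition of diffeomorphisms. -/
def Diffeo.comp {n : ℕ} (φ ψ : Diffeo n) : Diffeo n where
  toFun := φ.toFun ∘ ψ.toFun
  invFun := ψ.invFun ∘ φ.invFun
  smooth := φ.smooth.comp ψ.smooth
  smooth_inv := ψ.smooth_inv.comp φ.smooth_inv
  left_inv := fun x => by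
    simp only [Function.comp_apply]
    rw [φ.left_inv (ψ.toFun x), ψ.left_inv x]
  right_inv := fun y => by
    simp only [Function.comp_apply]
    rw [ψ.right_inv (φ.invFun y), φ.right_inv y]

/-- The group `G†` of `C^∞` diffeomorphisms of `ℝⁿ` fixing `0`. -/
def Gd (n : ℕ) := {ψ : Diffeo n // ψ.toFun 0 = 0}

/-- Composition in `G†`. -/
def Gd.comp {n : ℕ} (ψ₁ ψ₂ : Gd n) : Gd n :=
  ⟨ψ₁.val.comp ψ₂.val, by
    show ψ₁.val.toFun (ψ₂.val.toFun 0) = 0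
    rw [ψ₂.prop, ψ₁.prop]⟩

/-- The inverse of a diffeomorphism. -/
def Diffeo.symm {n : ℕ} (ψ : Diffeo n) : Diffeo n :=
  ⟨ψ.invFun, ψ.toFun, ψ.smooth_inv, ψ.smooth, ψ.right_inv, ψ.left_inv⟩

/-- Inversion in `G†`. -/
def Gd.inv {n : ℕ} (ψ : Gd n) : Gd n :=
  ⟨ψ.val.symm, by
    show ψ.val.invFun 0 = 0
    have h := ψ.val.left_inv 0
    rw [ψ.prop] at h
    exact h⟩

/-- Partial derivative in the `j`-th coordinate direction. -/
noncomputable def pd {n : ℕ} (j : Fin n) (f : (Fin n → ℝ) → ℝ) : (Fin n → ℝ) → ℝ :=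
  fun x => fderiv ℝ f x (Pi.single j 1)

/-- Iterated partial derivative `∂_{j_k}⋯∂_{j_1}`, with `j 0 = j_1` applied first. -/
noncomputable def itpd {n : ℕ} :
    ∀ {k : ℕ}, (Fin k → Fin n) → ((Fin n → ℝ) → ℝ) → ((Fin n → ℝ) → ℝ)
  | 0, _, f => f
  | _ + 1, j, f => itpd (fun m => j m.succ) (pd (j 0) f)

/-- The Taylor coordinate `β^i_{j_1…j_k}(ψ) = ∂_{j_k}⋯∂_{j_1}ψ^i(0)` on `G†`. -/
noncomputable def betaGen {n : ℕ} (k : ℕ) (j : Fin k → Fin n) (i : Fin n) : Gd n → ℝ :=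
  fun ψ => itpd j (fun x => ψ.val.toFun x i) 0

/-- The function `β^{-1}(ψ) = det(Dψ(0))⁻¹` on `G†`. -/
noncomputable def betaInv {n : ℕ} : Gd n → ℝ :=
  fun ψ => (Matrix.det (Matrix.of fun i j : Fin n => pd j (fun x => ψ.val.toFun x i) 0))⁻¹

/-- Generators of the algebra `F` of Taylor-coordinate functions on `G†`. -/
def genSet (n : ℕ) : Set (Gd n → ℝ) :=
  {g | ∃ (k : ℕ), 1 ≤ k ∧ ∃ (j : Fin k → Fin n) (i : Fin n), g = betaGen k j i} ∪ {betaInv}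

/-- The algebra `F` of functions on `G†` generated by the Taylor coordinates
`β^i_{j_1…j_k}` and `β^{-1}`. -/
noncomputable def Falg (n : ℕ) : Subalgebra ℝ (Gd n → ℝ) := Algebra.adjoin ℝ (genSet n)

/-! ### Auxiliary lemmas -/

section Aux

variable {n : ℕ}

lemma pd_contDiff (j : Fin n) {f : (Fin n → ℝ) → ℝ} (hf : ContDiff ℝ (⊤:ℕ∞) f) :
    ContDiff ℝ (⊤:ℕ∞) (pd j f) :=
  (hf.fderiv_right (by simp)).clm_apply contDiff_const

lemma itpd_contDiff : ∀ {k : ℕ} (j : Fin k → Fin n) {f : (Fin n → ℝ) → ℝ},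
    ContDiff ℝ (⊤:ℕ∞) f → ContDiff ℝ (⊤:ℕ∞) (itpd j f)
  | 0, _, _, hf => hf
  | k+1, j, _, hf => itpd_contDiff (fun m => j m.succ) (pd_contDiff (j 0) hf)

lemma ContDiff.diffable {f : (Fin n → ℝ) → ℝ} (hf : ContDiff ℝ (⊤:ℕ∞) f) :
    Differentiable ℝ f := hf.differentiable (by simp)

lemma pd_add (j : Fin n) {f g : (Fin n → ℝ) → ℝ} (hf : Differentiable ℝ f)
    (hg : Differentiable ℝ g) : pd j (f + g) = pd j f + pd j g := by
  funext x
  rw [pd]; simp only [Pi.add_apply]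
  rw [show ((f+g) : (Fin n → ℝ) → ℝ) = fun y => f y + g y from rfl, fderiv_fun_add (hf x) (hg x)]
  simp [pd]

lemma pd_mul (j : Fin n) {f g : (Fin n → ℝ) → ℝ} (hf : Differentiable ℝ f)
    (hg : Differentiable ℝ g) (x : Fin n → ℝ) :
    pd j (f * g) x = pd j f x * g x + f x * pd j g x := by
  have hfg : (f * g) = fun y => f y * g y := rfl
  rw [pd, hfg, fderiv_fun_mul (hf x) (hg x)]
  simp [pd]; ring

lemma pd_const (j : Fin n) (c : ℝ) : pd j (fun _ => c) = 0 := by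
  funext x; simp [pd]

lemma pd_comp (j : Fin n) {h : (Fin n → ℝ) → ℝ} {G : (Fin n → ℝ) → (Fin n → ℝ)}
    (hh : Differentiable ℝ h) (hG : Differentiable ℝ G) (x : Fin n → ℝ) :
    pd j (fun y => h (G y)) x = ∑ l, pd l h (G x) * pd j (fun y => G y l) x := by
  have hcomp : pd j (fun y => h (G y)) x = fderiv ℝ h (G x) (fderiv ℝ G x (Pi.single j 1)) := by
    rw [pd, show (fun y => h (G y)) = h ∘ G from rfl, fderiv_comp x (hh (G x)) (hG x)]; rfl
  rw [hcomp]
  have hv : ∀ l, fderiv ℝ (fun y => G y l) x (Pi.single j 1) = fderiv ℝ G x (Pi.single j 1) l := by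
    intro l
    have := (hasFDerivAt_pi'.mp (hG x).hasFDerivAt) l
    rw [this.fderiv]; rfl
  have hexp : (fderiv ℝ G x (Pi.single j 1))
      = ∑ l, (fderiv ℝ G x (Pi.single j 1) l) • (Pi.single l 1 : Fin n → ℝ) := by
    funext k
    simp [Finset.sum_apply, Pi.single_apply]
  rw [hexp, map_sum]
  congr 1; funext l
  rw [map_smul, smul_eq_mul, pd, pd, hv l]; ring

lemma itpd_succ {k : ℕ} (j : Fin (k+1) → Fin n) (f : (Fin n → ℝ) → ℝ) :
    itpd j f = itpd (fun m => j m.succ) (pd (j 0) f) := rfl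

lemma itpd_zero (j : Fin 0 → Fin n) (f : (Fin n → ℝ) → ℝ) : itpd j f = f := rfl

lemma itpd_one (j : Fin 1 → Fin n) (f : (Fin n → ℝ) → ℝ) : itpd j f = pd (j 0) f := rfl

lemma itpd_snoc : ∀ {k : ℕ} (m : Fin k → Fin n) (l : Fin n) (f : (Fin n → ℝ) → ℝ),
    itpd (Fin.snoc m l) f = pd l (itpd m f) := by
  intro k
  induction k with
  | zero =>
    intro m l f
    rw [itpd_succ, itpd_zero, itpd_zero]
    congr 1
  | succ k ih =>
    intro m l f
    rw [itpd_succ]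
    have h0 : (Fin.snoc m l : Fin (k+2) → Fin n) 0 = m 0 := by
      rw [show (0 : Fin (k+2)) = Fin.castSucc 0 from rfl, Fin.snoc_castSucc]
    have htail : (fun i : Fin (k+1) => (Fin.snoc m l : Fin (k+2) → Fin n) i.succ)
        = Fin.snoc (fun i : Fin k => m i.succ) l := by
      funext i
      induction i using Fin.lastCases with
      | last => simp [Fin.succ_last]
      | cast i =>
        rw [Fin.succ_castSucc, Fin.snoc_castSucc, Fin.snoc_castSucc]
    rw [h0, htail, ih, itpd_succ]

end Aux


section Main

variable {n : ℕ}

/-- Generators for the intermediate algebra of functions of `(p, x)`. -/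
def genC (n : ℕ) : Set ((Gd n × Gd n) → (Fin n → ℝ) → ℝ) :=
  {F | ∃ (k : ℕ) (m : Fin k → Fin n) (i : Fin n),
      F = fun p x => itpd m (fun y => p.1.val.toFun y i) (p.2.val.toFun x)} ∪
  {F | ∃ (k : ℕ) (m : Fin k → Fin n) (l : Fin n),
      F = fun p x => itpd m (fun y => p.2.val.toFun y l) x}

lemma comp1_contDiff (ψ : Gd n) (i : Fin n) :
    ContDiff ℝ (⊤:ℕ∞) (fun y => ψ.val.toFun y i) :=
  contDiff_pi.mp ψ.val.smooth i

lemma vec_diffable (ψ : Gd n) : Differentiable ℝ ψ.val.toFun :=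
  ψ.val.smooth.differentiable (by simp)

lemma genC_closed : ∀ F ∈ Algebra.adjoin ℝ (genC n),
    (∀ p, ContDiff ℝ (⊤:ℕ∞) (F p)) ∧
      ∀ j : Fin n, (fun p => pd j (F p)) ∈ Algebra.adjoin ℝ (genC n) := by
  intro F hF
  induction hF using Algebra.adjoin_induction with
  | mem F hFs =>
    rcases hFs with ⟨k, m, i, rfl⟩ | ⟨k, m, l, rfl⟩
    · constructor
      · intro p
        exact (itpd_contDiff m (comp1_contDiff p.1 i)).comp p.2.val.smooth
      · intro j
        have key : (fun p : Gd n × Gd n =>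
              pd j (fun x => itpd m (fun y => p.1.val.toFun y i) (p.2.val.toFun x)))
            = ∑ l : Fin n,
                (fun p x => itpd (Fin.snoc m l) (fun y => p.1.val.toFun y i) (p.2.val.toFun x))
                  * (fun p x => itpd (fun _ : Fin 1 => j) (fun y => p.2.val.toFun y l) x) := by
          funext p x
          rw [pd_comp j (itpd_contDiff m (comp1_contDiff p.1 i)).diffable (vec_diffable p.2) x]
          rw [Finset.sum_apply, Finset.sum_apply]
          refine Finset.sum_congr rfl fun l _ => ?_
          simp only [Pi.mul_apply]
          rw [itpd_snoc, itpd_one]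
        rw [key]
        refine Subalgebra.sum_mem _ fun l _ => mul_mem ?_ ?_
        · exact Algebra.subset_adjoin (Or.inl ⟨k+1, Fin.snoc m l, i, rfl⟩)
        · exact Algebra.subset_adjoin (Or.inr ⟨1, fun _ => j, l, rfl⟩)
    · constructor
      · intro p
        exact itpd_contDiff m (comp1_contDiff p.2 l)
      · intro j
        have key : (fun p : Gd n × Gd n =>
              pd j (fun x => itpd m (fun y => p.2.val.toFun y l) x))
            = fun p x => itpd (Fin.snoc m j) (fun y => p.2.val.toFun y l) x := by
          funext p
          rw [itpd_snoc]
        rw [key]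
        exact Algebra.subset_adjoin (Or.inr ⟨k+1, Fin.snoc m j, l, rfl⟩)
  | algebraMap r =>
    constructor
    · intro p
      exact contDiff_const
    · intro j
      have key : (fun p : Gd n × Gd n =>
          pd j ((algebraMap ℝ ((Gd n × Gd n) → (Fin n → ℝ) → ℝ) r) p)) = fun _ => 0 := by
        funext p
        exact pd_const j r
      rw [key]
      exact Subalgebra.zero_mem _
  | add x y hx hy ihx ihy =>
    refine ⟨fun p => (ihx.1 p).add (ihy.1 p), fun j => ?_⟩
    have key : (fun p => pd j ((x + y) p))
        = (fun p => pd j (x p)) + fun p => pd j (y p) := by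
      funext p
      exact pd_add j (ihx.1 p).diffable (ihy.1 p).diffable
    rw [key]
    exact add_mem (ihx.2 j) (ihy.2 j)
  | mul x y hx hy ihx ihy =>
    refine ⟨fun p => (ihx.1 p).mul (ihy.1 p), fun j => ?_⟩
    have key : (fun p => pd j ((x * y) p))
        = (fun p => pd j (x p)) * y + x * fun p => pd j (y p) := by
      funext p x'
      exact pd_mul j (ihx.1 p).diffable (ihy.1 p).diffable x'
    rw [key]
    exact add_mem (mul_mem (ihx.2 j) hy) (mul_mem hx (ihy.2 j))

lemma itpd_mem : ∀ (k : ℕ) (j : Fin k → Fin n) (F : (Gd n × Gd n) → (Fin n → ℝ) → ℝ),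
    F ∈ Algebra.adjoin ℝ (genC n) →
    (fun p => itpd j (F p)) ∈ Algebra.adjoin ℝ (genC n)
  | 0, _, _, hF => hF
  | k+1, j, F, hF =>
    itpd_mem k (fun m => j m.succ) (fun p => pd (j 0) (F p)) ((genC_closed F hF).2 (j 0))

/-- Evaluation at `x = 0`, as an algebra homomorphism. -/
noncomputable def evalZero (n : ℕ) :
    ((Gd n × Gd n) → (Fin n → ℝ) → ℝ) →ₐ[ℝ] ((Gd n × Gd n) → ℝ) :=
  (Pi.evalAlgHom ℝ (fun _ : Fin n → ℝ => ℝ) 0).compLeft (Gd n × Gd n)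

/-- The generating set of the target algebra. -/
def Bset (n : ℕ) : Set ((Gd n × Gd n) → ℝ) :=
  {F | ∃ g ∈ Falg n, ∃ h ∈ Falg n, F = fun p => g p.1 * h p.2}

lemma betaGen_mem_Falg {k : ℕ} (m : Fin (k+1) → Fin n) (i : Fin n) :
    betaGen (k+1) m i ∈ Falg n :=
  Algebra.subset_adjoin (Or.inl ⟨k+1, by omega, m, i, rfl⟩)

lemma eval_gen_mem : ∀ F ∈ genC n, evalZero n F ∈ Algebra.adjoin ℝ (Bset n) := by
  rintro F (⟨k, m, i, rfl⟩ | ⟨k, m, l, rfl⟩)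
  · match k, m with
    | 0, m =>
      have key : evalZero n (fun p x => itpd m (fun y => p.1.val.toFun y i) (p.2.val.toFun x))
          = 0 := by
        funext p
        show itpd m (fun y => p.1.val.toFun y i) (p.2.val.toFun 0) = 0
        rw [itpd_zero, p.2.prop, p.1.prop]
        rfl
      rw [key]; exact Subalgebra.zero_mem _
    | k+1, m =>
      have key : evalZero n (fun p x => itpd m (fun y => p.1.val.toFun y i) (p.2.val.toFun x))
          = fun p => betaGen (k+1) m i p.1 * (1 : Gd n → ℝ) p.2 := by
        funext p
        show itpd m (fun y => p.1.val.toFun y i) (p.2.val.toFun 0) = _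
        rw [p.2.prop]
        simp [betaGen]
      rw [key]
      exact Algebra.subset_adjoin ⟨betaGen (k+1) m i, betaGen_mem_Falg m i, 1, one_mem _, rfl⟩
  · match k, m with
    | 0, m =>
      have key : evalZero n (fun p x => itpd m (fun y => p.2.val.toFun y l) x) = 0 := by
        funext p
        show itpd m (fun y => p.2.val.toFun y l) 0 = 0
        rw [itpd_zero, p.2.prop]
        rfl
      rw [key]; exact Subalgebra.zero_mem _
    | k+1, m =>
      have key : evalZero n (fun p x => itpd m (fun y => p.2.val.toFun y l) x)
          = fun p => (1 : Gd n → ℝ) p.1 * betaGen (k+1) m l p.2 := by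
        funext p
        show itpd m (fun y => p.2.val.toFun y l) 0 = _
        simp [betaGen]
      rw [key]
      exact Algebra.subset_adjoin ⟨1, one_mem _, betaGen (k+1) m l, betaGen_mem_Falg m l, rfl⟩

lemma pullback_betaGen (k : ℕ) (j : Fin k → Fin n) (i : Fin n) :
    (fun p : Gd n × Gd n => betaGen k j i (Gd.comp p.1 p.2)) ∈ Algebra.adjoin ℝ (Bset n) := by
  have h0 : (fun (p : Gd n × Gd n) (x : Fin n → ℝ) => p.1.val.toFun (p.2.val.toFun x) i)
      ∈ Algebra.adjoin ℝ (genC n) :=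
    Algebra.subset_adjoin (Or.inl ⟨0, Fin.elim0, i, rfl⟩)
  have h1 := itpd_mem k j _ h0
  have h2 : evalZero n (fun p => itpd j (fun x => p.1.val.toFun (p.2.val.toFun x) i))
      ∈ (Algebra.adjoin ℝ (genC n)).map (evalZero n) := ⟨_, h1, rfl⟩
  rw [AlgHom.map_adjoin] at h2
  have h3 := Algebra.adjoin_le (Set.image_subset_iff.mpr
    (fun F hF => eval_gen_mem F hF)) h2
  exact h3

lemma jac_comp (ψ₁ ψ₂ : Gd n) :
    (Matrix.of fun i j : Fin n => pd j (fun x => (Gd.comp ψ₁ ψ₂).val.toFun x i) 0) =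
      (Matrix.of fun i j : Fin n => pd j (fun x => ψ₁.val.toFun x i) 0) *
        (Matrix.of fun i j : Fin n => pd j (fun x => ψ₂.val.toFun x i) 0) := by
  ext i j
  rw [Matrix.mul_apply]
  simp only [Matrix.of_apply]
  rw [show (fun x => (Gd.comp ψ₁ ψ₂).val.toFun x i)
      = fun y => ψ₁.val.toFun (ψ₂.val.toFun y) i from rfl,
    pd_comp j (comp1_contDiff ψ₁ i).diffable (vec_diffable ψ₂) 0, ψ₂.prop]

lemma betaInv_comp (ψ₁ ψ₂ : Gd n) :
    betaInv (Gd.comp ψ₁ ψ₂) = betaInv ψ₁ * betaInv ψ₂ := by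
  rw [betaInv, betaInv, betaInv, jac_comp, Matrix.det_mul, mul_inv]

lemma betaInv_mem_Falg : (betaInv : Gd n → ℝ) ∈ Falg n :=
  Algebra.subset_adjoin (Or.inr rfl)

end Main


/-- The algebra `F` is closed under the convolution coproduct: for `f ∈ F`, the function
`(ψ₁, ψ₂) ↦ f(ψ₁ ∘ ψ₂)` lies in the subalgebra of functions on `G† × G†` generated by
the functions `(ψ₁, ψ₂) ↦ g(ψ₁)·h(ψ₂)` with `g, h ∈ F`. -/
theorem Falg_closed_under_coproduct (n : ℕ) (f : Gd n → ℝ) (hf : f ∈ Falg n) :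
    (fun p : Gd n × Gd n => f (Gd.comp p.1 p.2)) ∈
      Algebra.adjoin ℝ
        {F : Gd n × Gd n → ℝ |
          ∃ g ∈ Falg n, ∃ h ∈ Falg n, F = fun p => g p.1 * h p.2} := by
  have hf' : f ∈ Algebra.adjoin ℝ (genSet n) := hf
  show _ ∈ Algebra.adjoin ℝ (Bset n)
  clear hf
  induction hf' using Algebra.adjoin_induction with
  | mem g hg =>
    rcases hg with ⟨k, hk, j, i, rfl⟩ | hg
    · exact pullback_betaGen k j i
    · rw [Set.mem_singleton_iff] at hg
      subst hg
      refine Algebra.subset_adjoin ⟨betaInv, betaInv_mem_Falg, betaInv, betaInv_mem_Falg, ?_⟩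
      funext p
      exact betaInv_comp p.1 p.2
  | algebraMap r => exact Subalgebra.algebraMap_mem _ r
  | add x y hx hy ihx ihy => exact add_mem ihx ihy
  | mul x y hx hy ihx ihy => exact mul_mem ihx ihy
end

section
/- The subalgebra F of functions on G† is closed under the antipode operation: for every f ∈ F, the function ψ ↦ f(ψ⁻¹) again belongs to F. -/
section Aux

open Finset

variable {n : ℕ}

local notation "E" => (Fin n → ℝ)

/-- Expansion of a vector in the standard basis. -/
lemma pi_expand (u : Fin n → ℝ) : u = ∑ b, u b • (Pi.single b 1 : Fin n → ℝ) := by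
  have h : ∀ b : Fin n, (Pi.single b 1 : Fin n → ℝ) = fun j => if b = j then (1:ℝ) else 0 := by
    intro b; funext j; rw [Pi.single_apply]; exact if_congr eq_comm rfl rfl
  simp_rw [h]
  exact pi_eq_sum_univ u

/-- Components of iterated derivatives of vector valued functions. -/
lemma iteratedFDeriv_pi_apply {k : ℕ} (g : E → E) (hg : ContDiff ℝ (⊤ : ℕ∞) g)
    (i : Fin n) (x : E) (v : Fin k → E) :
    iteratedFDeriv ℝ k (fun y => g y i) x v = iteratedFDeriv ℝ k g x v i := by
  have h : (fun y => g y i) = (ContinuousLinearMap.proj (R := ℝ) (φ := fun _ : Fin n => ℝ) i) ∘ g :=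
    rfl
  rw [h, ContinuousLinearMap.iteratedFDeriv_comp_left _ (hg.contDiffAt (x := x)) (mod_cast le_top)]
  rfl

lemma fderiv_pi_apply (g : E → E) (hg : ContDiff ℝ (⊤ : ℕ∞) g) (i : Fin n) (x : E) (v : E) :
    fderiv ℝ (fun y => g y i) x v = fderiv ℝ g x v i := by
  have h1 := iteratedFDeriv_pi_apply (k := 1) g hg i x (fun _ => v)
  rw [iteratedFDeriv_one_apply, iteratedFDeriv_one_apply] at h1
  exact h1

lemma itpd_eq_iteratedFDeriv : ∀ {k : ℕ} (j : Fin k → Fin n) (f : E → ℝ)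
    (_ : ContDiff ℝ (⊤ : ℕ∞) f) (x : E),
    itpd j f x = iteratedFDeriv ℝ k f x (fun m => Pi.single (j m.rev) 1)
  | 0, j, f, hf, x => by simp [itpd]
  | (k+1), j, f, hf, x => by
    have hd : ContDiff ℝ (⊤ : ℕ∞) (fderiv ℝ f) := hf.fderiv_right (mod_cast le_top)
    have hpd : ContDiff ℝ (⊤ : ℕ∞) (pd (j 0) f) := by
      have h : pd (j 0) f
          = (ContinuousLinearMap.apply ℝ ℝ (Pi.single (j 0) 1)) ∘ fderiv ℝ f := rfl
      rw [h]
      exact (ContinuousLinearMap.apply ℝ ℝ (Pi.single (j 0) 1)).contDiff.comp hd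
    show itpd (fun m => j m.succ) (pd (j 0) f) x = _
    rw [itpd_eq_iteratedFDeriv _ _ hpd x]
    conv_rhs => rw [iteratedFDeriv_succ_apply_right]
    have h : pd (j 0) f
        = (ContinuousLinearMap.apply ℝ ℝ (Pi.single (j 0) 1)) ∘ fderiv ℝ f := rfl
    rw [h, ContinuousLinearMap.iteratedFDeriv_comp_left _ (hd.contDiffAt (x := x)) (mod_cast le_top)]
    rw [ContinuousLinearMap.compContinuousMultilinearMap_coe, Function.comp_apply,
      ContinuousLinearMap.apply_apply]
    have hinit : Fin.init (fun m : Fin (k+1) => (Pi.single (j m.rev) 1 : Fin n → ℝ))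
        = fun m : Fin k => (Pi.single (j m.rev.succ) 1 : Fin n → ℝ) := by
      funext m
      simp [Fin.init, Fin.rev_castSucc]
    rw [hinit]
    simp [Fin.rev_last]

/-- `B k j i ψ` is the iterated derivative of `ψ` at `0`, in coordinates. -/
noncomputable def Bfun (n k : ℕ) (j : Fin k → Fin n) (i : Fin n) : Gd n → ℝ :=
  fun ψ => iteratedFDeriv ℝ k ψ.val.toFun 0 (fun m => Pi.single (j m) 1) i

/-- `C k j i ψ` is the iterated derivative of `ψ⁻¹` at `0`, in coordinates. -/
noncomputable def Cfun (n k : ℕ) (j : Fin k → Fin n) (i : Fin n) : Gd n → ℝ :=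
  fun ψ => iteratedFDeriv ℝ k ψ.val.invFun 0 (fun m => Pi.single (j m) 1) i

lemma Cfun_eq (k : ℕ) (j : Fin k → Fin n) (i : Fin n) :
    Cfun n k j i = fun ψ => Bfun n k j i (Gd.inv ψ) := rfl

lemma betaGen_eq_Bfun (k : ℕ) (j : Fin k → Fin n) (i : Fin n) :
    betaGen k j i = Bfun n k (fun m => j m.rev) i := by
  funext ψ
  have hsc : ContDiff ℝ (⊤ : ℕ∞) (fun x => ψ.val.toFun x i) :=
    ((ContinuousLinearMap.proj (R := ℝ) (φ := fun _ : Fin n => ℝ) i)).contDiff.comp ψ.val.smooth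
  show itpd j (fun x => ψ.val.toFun x i) 0 = _
  rw [itpd_eq_iteratedFDeriv j _ hsc 0,
    iteratedFDeriv_pi_apply _ ψ.val.smooth i 0 (fun m => Pi.single (j m.rev) 1)]
  rfl

lemma Bfun_mem (k : ℕ) (hk : 1 ≤ k) (j : Fin k → Fin n) (i : Fin n) :
    Bfun n k j i ∈ Falg n := by
  have h2 := betaGen_eq_Bfun (n := n) k (fun m => j m.rev) i
  rw [show (fun m : Fin k => j m.rev.rev) = j from funext fun m => by rw [Fin.rev_rev]] at h2
  rw [← h2]
  exact Algebra.subset_adjoin (Or.inl ⟨k, hk, _, i, rfl⟩)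

lemma const_mem (c : ℝ) : (fun _ : Gd n => c) ∈ Falg n :=
  (Falg n).algebraMap_mem c

/-- The Jacobian matrix of `ψ` at 0. -/
noncomputable def Amat (ψ : Gd n) : Matrix (Fin n) (Fin n) ℝ :=
  Matrix.of fun a b => fderiv ℝ ψ.val.toFun 0 (Pi.single b 1) a

lemma Bfun_one (j : Fin 1 → Fin n) (i : Fin n) (ψ : Gd n) :
    Bfun n 1 j i ψ = Amat ψ i (j 0) := by
  show iteratedFDeriv ℝ 1 ψ.val.toFun 0 (fun m => Pi.single (j m) 1) i = _
  rw [iteratedFDeriv_one_apply]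
  rfl

lemma Cfun_one (j : Fin 1 → Fin n) (i : Fin n) (ψ : Gd n) :
    Cfun n 1 j i ψ = Amat (Gd.inv ψ) i (j 0) := Bfun_one j i (Gd.inv ψ)

lemma clm_expand (L : E →L[ℝ] E) (u : E) :
    L u = ∑ b, u b • L (Pi.single b 1) := by
  conv_lhs => rw [pi_expand u]
  rw [map_sum]
  simp

lemma invFun_zero (ψ : Gd n) : ψ.val.invFun 0 = 0 := (Gd.inv ψ).prop

lemma Amat_mul_inv_aux (ψ : Gd n) :
    Amat ψ * Amat (Gd.inv ψ) = 1 := by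
  ext a c
  have hw := ψ.val.smooth
  have hφ := ψ.val.smooth_inv
  have hchain : fderiv ℝ ψ.val.toFun 0 (fderiv ℝ ψ.val.invFun 0 (Pi.single c 1))
      = Pi.single c 1 := by
    have hcomp : fderiv ℝ (ψ.val.toFun ∘ ψ.val.invFun) 0
        = (fderiv ℝ ψ.val.toFun (ψ.val.invFun 0)).comp (fderiv ℝ ψ.val.invFun 0) :=
      fderiv_comp 0 ((hw.differentiable (by simp)) _) ((hφ.differentiable (by simp)) 0)
    have hid : ψ.val.toFun ∘ ψ.val.invFun = id := funext ψ.val.right_inv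
    rw [hid, fderiv_id, invFun_zero] at hcomp
    have := congrArg (fun L => L (Pi.single c 1)) hcomp.symm
    simpa using this
  have hexp := congrArg (fun u => u a) (clm_expand (fderiv ℝ ψ.val.toFun 0)
    (fderiv ℝ ψ.val.invFun 0 (Pi.single c 1)))
  rw [hchain] at hexp
  simp only [Finset.sum_apply, Pi.smul_apply, smul_eq_mul] at hexp
  have h1 : (Pi.single c 1 : Fin n → ℝ) a = if a = c then 1 else 0 := Pi.single_apply ..
  rw [h1] at hexp
  have hstep : ∑ b, Amat ψ a b * Amat (Gd.inv ψ) b c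
      = ∑ b, (fderiv ℝ ψ.val.invFun 0) (Pi.single c 1) b
          * (fderiv ℝ ψ.val.toFun 0) (Pi.single b 1) a := by
    refine Finset.sum_congr rfl fun b _ => ?_
    exact mul_comm ((fderiv ℝ ψ.val.toFun 0) (Pi.single b 1) a)
      ((fderiv ℝ ψ.val.invFun 0) (Pi.single c 1) b)
  rw [Matrix.mul_apply, Matrix.one_apply, hstep]
  exact hexp.symm

lemma isUnit_det_Amat (ψ : Gd n) : IsUnit (Amat ψ).det := by
  have h := congrArg Matrix.det (Amat_mul_inv_aux ψ)
  rw [Matrix.det_mul, Matrix.det_one] at h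
  exact IsUnit.of_mul_eq_one _ h

lemma Amat_mul_inv (ψ : Gd n) : Amat ψ * (Amat ψ)⁻¹ = 1 :=
  Matrix.mul_nonsing_inv _ (isUnit_det_Amat ψ)

lemma Amat_entry_mem (a b : Fin n) : (fun ψ : Gd n => Amat ψ a b) ∈ Falg n := by
  have h : (fun ψ : Gd n => Amat ψ a b) = Bfun n 1 (fun _ => b) a := by
    funext ψ; rw [Bfun_one]
  rw [h]
  exact Bfun_mem 1 le_rfl _ _

lemma det_mem (M : Gd n → Matrix (Fin n) (Fin n) ℝ)
    (h : ∀ a b, (fun ψ => M ψ a b) ∈ Falg n) :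
    (fun ψ => (M ψ).det) ∈ Falg n := by
  have e : (fun ψ => (M ψ).det)
      = ∑ σ : Equiv.Perm (Fin n), (Equiv.Perm.sign σ : ℝ) • ∏ a, (fun ψ => M ψ (σ a) a) := by
    funext ψ
    simp [Matrix.det_apply', Finset.sum_apply, Finset.prod_apply]
  rw [e]
  exact Subalgebra.sum_mem _ fun σ _ =>
    Subalgebra.smul_mem _ (Subalgebra.prod_mem _ fun a _ => h _ _) _

lemma betaInv_eq : (betaInv : Gd n → ℝ) = fun ψ => ((Amat ψ).det)⁻¹ := by
  funext ψ
  unfold betaInv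
  congr 1
  congr 1
  ext a b
  show pd b (fun x => ψ.val.toFun x a) 0 = _
  unfold pd
  rw [fderiv_pi_apply _ ψ.val.smooth a 0]
  rfl

lemma detInv_mem : (fun ψ : Gd n => ((Amat ψ).det)⁻¹) ∈ Falg n := by
  rw [← betaInv_eq]
  exact Algebra.subset_adjoin (Or.inr rfl)

lemma adj_mem (a b : Fin n) : (fun ψ : Gd n => (Amat ψ).adjugate a b) ∈ Falg n := by
  simp_rw [Matrix.adjugate_apply]
  apply det_mem
  intro x y
  have h : (fun ψ : Gd n => ((Amat ψ).updateRow b (Pi.single a 1)) x y)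
      = fun ψ : Gd n => if x = b then (Pi.single a 1 : Fin n → ℝ) y else Amat ψ x y := by
    funext ψ; rw [Matrix.updateRow_apply]
  rw [h]
  by_cases hxb : x = b
  · simp only [hxb, if_true]; exact const_mem _
  · simp only [hxb, if_false]; exact Amat_entry_mem _ _

lemma Ainv_entry_mem (a b : Fin n) : (fun ψ : Gd n => (Amat ψ)⁻¹ a b) ∈ Falg n := by
  have h : (fun ψ : Gd n => (Amat ψ)⁻¹ a b)
      = fun ψ : Gd n => ((Amat ψ).det)⁻¹ * (Amat ψ).adjugate a b := by
    funext ψ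
    rw [Matrix.inv_def, Matrix.smul_apply, Ring.inverse_eq_inv, smul_eq_mul]
  rw [h]
  exact mul_mem detInv_mem (adj_mem a b)

end Aux


section Aux2

open Finset

variable {n : ℕ}

noncomputable local instance (k : ℕ) : DecidableEq (OrderedFinpartition k) :=
  Classical.decEq _

lemma fin_val_le_strictMono {L : ℕ} {f : Fin L → Fin L} (hf : StrictMono f) :
    ∀ v : ℕ, ∀ m : Fin L, m.val = v → v ≤ (f m).val := by
  intro v
  induction v using Nat.strong_induction_on with
  | _ v IH =>
    intro m hm
    rcases Nat.eq_zero_or_pos v with h0 | hpos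
    · omega
    · have hvL : v < L := hm ▸ m.isLt
      have hlt : (⟨v - 1, by omega⟩ : Fin L) < m := by
        rw [Fin.lt_def]
        simp [hm]
        omega
      have h1 : v - 1 ≤ (f ⟨v - 1, by omega⟩).val := IH (v - 1) (by omega) _ rfl
      have h2 : (f ⟨v - 1, by omega⟩).val < (f m).val := hf hlt
      omega

lemma strictMono_fin_id {L : ℕ} {f : Fin L → Fin L} (hf : StrictMono f) (m : Fin L) : f m = m := by
  have hsurj : Function.Surjective f := Finite.surjective_of_injective hf.injective
  have hg : ∀ y, f ((hsurj y).choose) = y := fun y => (hsurj y).choose_spec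
  have hgmono : StrictMono fun y => (hsurj y).choose := by
    intro a b hab
    rw [← hf.lt_iff_lt, hg, hg]
    exact hab
  have hlow : m.val ≤ (f m).val := fin_val_le_strictMono hf m.val m rfl
  have hup : (f m).val ≤ m.val := by
    have h1 := fin_val_le_strictMono hgmono (f m).val (f m) rfl
    have h2 : (hsurj (f m)).choose = m := hf.injective (hg (f m))
    rw [h2] at h1
    exact h1
  exact Fin.val_injective (Nat.le_antisymm hup hlow)

lemma ofp_eq_atomic {k : ℕ} (c : OrderedFinpartition k) (h : c.length = k) :
    c = OrderedFinpartition.atomic k := by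
  have hcard : ∑ m : Fin c.length, c.partSize m = k := by
    have h1 := Fintype.card_congr c.equivSigma
    simpa [Fintype.card_sigma] using h1
  have hsum1 : ∑ _m : Fin c.length, 1 = ∑ m : Fin c.length, c.partSize m := by
    rw [hcard]
    simp [h]
  have hle : ∀ m ∈ (univ : Finset (Fin c.length)), 1 ≤ c.partSize m := fun m _ =>
    c.partSize_pos m
  have hps : ∀ m : Fin c.length, c.partSize m = 1 := by
    intro m
    exact ((Finset.sum_eq_sum_iff_of_le hle).mp hsum1 m (mem_univ m)).symm
  obtain ⟨L, ps, pos, emb, embmono, partsmono, disj, cover⟩ := c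
  simp only at h hps
  subst h
  have hps' : ps = fun _ => 1 := funext hps
  subst hps'
  have hmono : StrictMono fun m => emb m ⟨0, Nat.zero_lt_one⟩ := by
    have h2 : (fun m => emb m ⟨0, Nat.zero_lt_one⟩)
        = fun m => emb m ⟨(fun _ : Fin L => 1) m - 1,
            Nat.sub_one_lt_of_lt (pos m)⟩ := by
      funext m
      congr 1
    rw [h2]
    exact partsmono
  have hemb : emb = fun m (_ : Fin 1) => m := by
    funext m t
    have ht : t = ⟨0, Nat.zero_lt_one⟩ := Subsingleton.elim _ _
    rw [ht]
    exact strictMono_fin_id hmono m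
  subst hemb
  rfl

/-- The `k`-th derivative of the identity applied to basis vectors (a constant). -/
noncomputable def KC (n k : ℕ) (s : Fin k → Fin n) (i : Fin n) : ℝ :=
  iteratedFDeriv ℝ k (fun x : (Fin n → ℝ) => x) 0 (fun m => Pi.single (s m) 1) i

lemma cmm_expand {L : ℕ} (g : ContinuousMultilinearMap ℝ (fun _ : Fin L => (Fin n → ℝ))
    (Fin n → ℝ)) (u : Fin L → (Fin n → ℝ)) (i : Fin n) :
    g u i = ∑ r : Fin L → Fin n, (∏ l, u l (r l)) * g (fun l => Pi.single (r l) 1) i := by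
  have h2 : g u = ∑ r : Fin L → Fin n, (∏ l, u l (r l)) • g (fun l => Pi.single (r l) 1) := by
    conv_lhs => rw [show u = fun l => ∑ b, u l b • (Pi.single b 1 : Fin n → ℝ) from
      funext fun l => pi_expand (u l)]
    rw [show (g (fun l => ∑ b, u l b • (Pi.single b 1 : Fin n → ℝ)))
        = ∑ r : Fin L → Fin n, g (fun l => u l (r l) • (Pi.single (r l) 1 : Fin n → ℝ)) from
      g.toMultilinearMap.map_sum (fun l b => u l b • (Pi.single b 1 : Fin n → ℝ))]
    exact Finset.sum_congr rfl fun r _ =>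
      g.map_smul_univ (fun l => u l (r l)) (fun l => Pi.single (r l) 1)
  rw [h2, Finset.sum_apply]
  simp

lemma taylor_identity (ψ : Gd n) (k : ℕ) :
    FormalMultilinearSeries.taylorComp (ftaylorSeries ℝ ψ.val.invFun 0)
      (ftaylorSeries ℝ ψ.val.toFun 0) k
      = iteratedFDeriv ℝ k (fun x : (Fin n → ℝ) => x) 0 := by
  have hw : HasFTaylorSeriesUpToOn ((⊤:ℕ∞) : WithTop ℕ∞) ψ.val.toFun
      (ftaylorSeries ℝ ψ.val.toFun) Set.univ :=
    hasFTaylorSeriesUpToOn_univ_iff.mpr (contDiff_iff_ftaylorSeries.mp ψ.val.smooth)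
  have hφ : HasFTaylorSeriesUpToOn ((⊤:ℕ∞) : WithTop ℕ∞) ψ.val.invFun
      (ftaylorSeries ℝ ψ.val.invFun) Set.univ :=
    hasFTaylorSeriesUpToOn_univ_iff.mpr (contDiff_iff_ftaylorSeries.mp ψ.val.smooth_inv)
  have hcomp := hφ.comp hw (Set.mapsTo_univ _ _)
  have h2 := hcomp.eq_iteratedFDerivWithin_of_uniqueDiffOn (m := k) (mod_cast le_top)
    uniqueDiffOn_univ (Set.mem_univ 0)
  rw [iteratedFDerivWithin_univ] at h2
  have hid : ψ.val.invFun ∘ ψ.val.toFun = fun x : (Fin n → ℝ) => x :=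
    funext ψ.val.left_inv
  rw [hid, ψ.prop] at h2
  exact h2

lemma eval_identity (ψ : Gd n) (k : ℕ) (s : Fin k → Fin n) (i : Fin n) :
    ∑ c : OrderedFinpartition k, ∑ r : Fin c.length → Fin n,
      (∏ l, Bfun n (c.partSize l) (fun t => s (c.emb l t)) (r l) ψ) * Cfun n c.length r i ψ
      = KC n k s i := by
  have h := congrArg (fun (T : ContinuousMultilinearMap ℝ (fun _ : Fin k => (Fin n → ℝ))
      (Fin n → ℝ)) => T (fun m => Pi.single (s m) 1) i) (taylor_identity ψ k)
  have h' : (∑ c : OrderedFinpartition k,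
      FormalMultilinearSeries.compAlongOrderedFinpartition
        (ftaylorSeries ℝ ψ.val.invFun 0) (ftaylorSeries ℝ ψ.val.toFun 0) c)
      (fun m => Pi.single (s m) 1) i = KC n k s i := h
  rw [ContinuousMultilinearMap.sum_apply, Finset.sum_apply] at h'
  rw [← h']
  refine Finset.sum_congr rfl fun c _ => ?_
  rw [FormalMultilinearSeries.compAlongOrderedFinpartition_apply, cmm_expand]
  exact Finset.sum_congr rfl fun r _ => rfl

lemma matrix_solve {k : ℕ} (A N : Matrix (Fin n) (Fin n) ℝ) (hAN : A * N = 1)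
    (C : (Fin k → Fin n) → ℝ) (t : Fin k → Fin n) :
    ∑ s : Fin k → Fin n, (∏ m, N (s m) (t m))
        * ∑ r : Fin k → Fin n, (∏ l, A (r l) (s l)) * C r
      = C t := by
  simp_rw [Finset.mul_sum]
  rw [Finset.sum_comm]
  have h1 : ∀ r : Fin k → Fin n,
      ∑ s : Fin k → Fin n, (∏ m, N (s m) (t m)) * ((∏ l, A (r l) (s l)) * C r)
      = (∏ m, (A * N) (r m) (t m)) * C r := by
    intro r
    have h2 : ∀ s : Fin k → Fin n,
        (∏ m, N (s m) (t m)) * ((∏ l, A (r l) (s l)) * C r)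
        = (∏ m, A (r m) (s m) * N (s m) (t m)) * C r := by
      intro s
      rw [Finset.prod_mul_distrib, ← mul_assoc]
      ring
    rw [Finset.sum_congr rfl fun s _ => h2 s, ← Finset.sum_mul]
    congr 1
    have h4 : (∏ m, (A * N) (r m) (t m))
        = ∏ m, ∑ a, A (r m) a * N a (t m) :=
      Finset.prod_congr rfl fun m _ => Matrix.mul_apply
    rw [h4, Finset.prod_univ_sum, Fintype.piFinset_univ]
  rw [Finset.sum_congr rfl fun r _ => h1 r, hAN]
  have h3 : ∀ r : Fin k → Fin n,
      (∏ m, (1 : Matrix (Fin n) (Fin n) ℝ) (r m) (t m)) = if r = t then 1 else 0 := by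
    intro r
    by_cases hr : r = t
    · subst hr; simp [Matrix.one_apply]
    · obtain ⟨m, hm⟩ := Function.ne_iff.mp hr
      rw [if_neg hr]
      exact Finset.prod_eq_zero (mem_univ m) (by simp [Matrix.one_apply, hm])
  rw [Finset.sum_congr rfl fun r _ => by rw [h3 r]]
  simp

lemma Cfun_solved (ψ : Gd n) (k : ℕ) (t : Fin k → Fin n) (i : Fin n) :
    Cfun n k t i ψ = ∑ s : Fin k → Fin n, (∏ m, (Amat ψ)⁻¹ (s m) (t m)) *
      (KC n k s i - ∑ c ∈ univ.erase (OrderedFinpartition.atomic k),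
        ∑ r : Fin c.length → Fin n,
          (∏ l, Bfun n (c.partSize l) (fun t' => s (c.emb l t')) (r l) ψ)
            * Cfun n c.length r i ψ) := by
  have hbase : ∀ s : Fin k → Fin n,
      KC n k s i - (∑ c ∈ univ.erase (OrderedFinpartition.atomic k),
        ∑ r : Fin c.length → Fin n,
          (∏ l, Bfun n (c.partSize l) (fun t' => s (c.emb l t')) (r l) ψ)
            * Cfun n c.length r i ψ)
      = ∑ r : Fin k → Fin n, (∏ l, Amat ψ (r l) (s l)) * Cfun n k r i ψ := by
    intro s
    have h := eval_identity ψ k s i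
    rw [← Finset.add_sum_erase _ _ (mem_univ (OrderedFinpartition.atomic k))] at h
    have hat : (∑ r : Fin (OrderedFinpartition.atomic k).length → Fin n,
        (∏ l, Bfun n ((OrderedFinpartition.atomic k).partSize l)
          (fun t' => s ((OrderedFinpartition.atomic k).emb l t')) (r l) ψ)
            * Cfun n (OrderedFinpartition.atomic k).length r i ψ)
        = ∑ r : Fin k → Fin n, (∏ l, Amat ψ (r l) (s l)) * Cfun n k r i ψ := by
      refine Finset.sum_congr rfl fun r _ => ?_
      congr 1
      refine Finset.prod_congr rfl fun l _ => ?_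
      exact Bfun_one _ _ ψ
    rw [hat] at h
    linarith
  rw [Finset.sum_congr rfl fun s _ => by rw [hbase s]]
  exact (matrix_solve (Amat ψ) (Amat ψ)⁻¹ (Amat_mul_inv ψ) (fun r => Cfun n k r i ψ) t).symm

lemma Cfun_mem : ∀ k : ℕ, 1 ≤ k → ∀ (t : Fin k → Fin n) (i : Fin n),
    Cfun n k t i ∈ Falg n := by
  intro k
  induction k using Nat.strong_induction_on with
  | _ k IH =>
    intro hk t i
    have hfun : Cfun n k t i
        = ∑ s : Fin k → Fin n, (∏ m, (fun ψ : Gd n => (Amat ψ)⁻¹ (s m) (t m)))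
            * ((fun _ : Gd n => KC n k s i)
              - ∑ c ∈ univ.erase (OrderedFinpartition.atomic k),
                  ∑ r : Fin c.length → Fin n,
                    (∏ l, Bfun n (c.partSize l) (fun t' => s (c.emb l t')) (r l))
                      * Cfun n c.length r i) := by
      funext ψ
      have h := Cfun_solved ψ k t i
      simpa [Finset.sum_apply, Finset.prod_apply, Pi.mul_apply, Pi.sub_apply] using h
    rw [hfun]
    refine Subalgebra.sum_mem _ fun s _ => mul_mem
      (Subalgebra.prod_mem _ fun m _ => Ainv_entry_mem _ _)
      (sub_mem (const_mem _)
        (Subalgebra.sum_mem _ fun c hc => Subalgebra.sum_mem _ fun r _ => mul_mem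
          (Subalgebra.prod_mem _ fun l _ => Bfun_mem _ (c.partSize_pos l) _ _) ?_))
    have hne := Finset.ne_of_mem_erase hc
    have hlt : c.length < k :=
      lt_of_le_of_ne c.length_le (fun h => hne (ofp_eq_atomic c h))
    exact IH c.length hlt (c.length_pos (by omega)) r i

end Aux2


/-- The algebra `F` is closed under the antipode: for `f ∈ F`, the function
`ψ ↦ f(ψ⁻¹)` again belongs to `F`. -/
theorem Falg_closed_under_antipode (n : ℕ) (f : Gd n → ℝ) (hf : f ∈ Falg n) :
    (fun ψ : Gd n => f (Gd.inv ψ)) ∈ Falg n := by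
  induction hf using Algebra.adjoin_induction with
  | mem g hg =>
    rcases hg with ⟨k, hk, j, i, rfl⟩ | hg
    · have h : (fun ψ : Gd n => betaGen k j i (Gd.inv ψ))
          = Cfun n k (fun m => j m.rev) i := by
        rw [betaGen_eq_Bfun]
        rfl
      rw [h]
      exact Cfun_mem k hk _ i
    · rw [Set.mem_singleton_iff] at hg
      subst hg
      have h : (fun ψ : Gd n => betaInv (Gd.inv ψ)) = fun ψ : Gd n => (Amat ψ).det := by
        funext ψ
        have h1 : betaInv (Gd.inv ψ) = ((Amat (Gd.inv ψ)).det)⁻¹ :=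
          congrFun betaInv_eq (Gd.inv ψ)
        have h2 : (Amat ψ).det * (Amat (Gd.inv ψ)).det = 1 := by
          rw [← Matrix.det_mul, Amat_mul_inv_aux ψ, Matrix.det_one]
        rw [h1]
        exact inv_eq_of_mul_eq_one_left h2
      rw [h]
      exact det_mem _ Amat_entry_mem
  | algebraMap r => exact (Falg n).algebraMap_mem r
  | add x y hx hy ihx ihy => exact add_mem ihx ihy
  | mul x y hx hy ihx ihy => exact mul_mem ihx ihy
end

section
/- Let ψ be a C∞ diffeomorphism of ℝ with ψ'(x) > 0 for all x, and let f₀, f₁ ∈ C_c^∞(ℝ). Then ∫_ℝ f₀'(x)·f₁(ψ⁻¹(x))·log(ψ'(ψ⁻¹(x))) dx + ∫_ℝ f₁'(y)·f₀(ψ(y))·log(ψ'(y)) dy = −∫_ℝ f₀(ψ(y))·f₁(y)·(ψ''(y)/ψ'(y)) dy, all integrals with respect to Lebesgue measure. -/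
open MeasureTheory

/-- The transgression identity underlying `B(ũ₁) = C₁`: for a `C^∞` diffeomorphism `ψ`
of `ℝ` with `ψ' > 0` and `f₀, f₁ ∈ C_c^∞(ℝ)`,
`∫ f₀'(x)·f₁(ψ⁻¹(x))·log(ψ'(ψ⁻¹(x))) dx + ∫ f₁'(y)·f₀(ψ(y))·log(ψ'(y)) dy
  = −∫ f₀(ψ(y))·f₁(y)·(ψ''(y)/ψ'(y)) dy`. -/
theorem transgression_identity (ψ ψinv : ℝ → ℝ)
    (hψ : ContDiff ℝ (⊤ : ℕ∞) ψ) (hψinv : ContDiff ℝ (⊤ : ℕ∞) ψinv)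
    (hleft : Function.LeftInverse ψinv ψ) (hright : Function.RightInverse ψinv ψ)
    (hpos : ∀ x, 0 < deriv ψ x)
    (f₀ f₁ : ℝ → ℝ)
    (hf₀ : ContDiff ℝ (⊤ : ℕ∞) f₀) (hf₀c : HasCompactSupport f₀)
    (hf₁ : ContDiff ℝ (⊤ : ℕ∞) f₁) (hf₁c : HasCompactSupport f₁) :
    (∫ x, deriv f₀ x * f₁ (ψinv x) * Real.log (deriv ψ (ψinv x))) +
        (∫ y, deriv f₁ y * f₀ (ψ y) * Real.log (deriv ψ y)) =
      -∫ y, f₀ (ψ y) * f₁ y * (deriv (deriv ψ) y / deriv ψ y) := by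
  have hψ' : ContDiff ℝ (⊤ : ℕ∞) (deriv ψ) := (contDiff_infty_iff_deriv.mp hψ).2
  have hne : ∀ y, deriv ψ y ≠ 0 := fun y => (hpos y).ne'
  have hdψ : ∀ y, HasDerivAt ψ (deriv ψ y) y := fun y =>
    (hψ.differentiable (by simp) y).hasDerivAt
  have hdψ' : ∀ y, HasDerivAt (deriv ψ) (deriv (deriv ψ) y) y := fun y =>
    (hψ'.differentiable (by simp) y).hasDerivAt
  have hdf₀ : ∀ x, HasDerivAt f₀ (deriv f₀ x) x := fun x =>
    (hf₀.differentiable (by simp) x).hasDerivAt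
  have hdf₁ : ∀ y, HasDerivAt f₁ (deriv f₁ y) y := fun y =>
    (hf₁.differentiable (by simp) y).hasDerivAt
  have hLcd : ContDiff ℝ (⊤ : ℕ∞) (fun y => Real.log (deriv ψ y)) := hψ'.log hne
  have hLcont : Continuous (fun y => Real.log (deriv ψ y)) := hLcd.continuous
  have hdL : ∀ y, HasDerivAt (fun y => Real.log (deriv ψ y))
      (deriv (deriv ψ) y / deriv ψ y) y := fun y => (hdψ' y).log (hne y)
  -- the product function whose derivative integrates to zero
  set F : ℝ → ℝ := fun y => f₀ (ψ y) * f₁ y * Real.log (deriv ψ y) with hFdef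
  have hF : ContDiff ℝ (⊤ : ℕ∞) F := ((hf₀.comp hψ).mul hf₁).mul hLcd
  have hFc : HasCompactSupport F := (hf₁c.mul_left).mul_right
  have hdF : ∀ y, HasDerivAt F
      ((deriv f₀ (ψ y) * deriv ψ y * f₁ y + f₀ (ψ y) * deriv f₁ y) *
          Real.log (deriv ψ y)
        + f₀ (ψ y) * f₁ y * (deriv (deriv ψ) y / deriv ψ y)) y := fun y =>
    (((hdf₀ (ψ y)).comp y (hdψ y)).mul (hdf₁ y)).mul (hdL y)
  -- the three pieces of deriv F
  set g₁ : ℝ → ℝ := fun y =>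
    deriv f₀ (ψ y) * deriv ψ y * f₁ y * Real.log (deriv ψ y) with hg₁def
  set g₂ : ℝ → ℝ := fun y => deriv f₁ y * f₀ (ψ y) * Real.log (deriv ψ y) with hg₂def
  set g₃ : ℝ → ℝ := fun y =>
    f₀ (ψ y) * f₁ y * (deriv (deriv ψ) y / deriv ψ y) with hg₃def
  have hderivF : deriv F = fun y => g₁ y + g₂ y + g₃ y := by
    funext y
    rw [(hdF y).deriv, hg₁def, hg₂def, hg₃def]
    ring
  -- integrability
  have hcont₁ : Continuous g₁ :=
    ((((hf₀.continuous_deriv (by exact_mod_cast le_top)).comp hψ.continuous).mul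
      hψ'.continuous).mul hf₁.continuous).mul hLcont
  have hcont₂ : Continuous g₂ :=
    (((hf₁.continuous_deriv (by exact_mod_cast le_top))).mul (hf₀.continuous.comp hψ.continuous)).mul hLcont
  have hcont₃ : Continuous g₃ :=
    ((hf₀.continuous.comp hψ.continuous).mul hf₁.continuous).mul
      (hψ'.continuous_deriv (by exact_mod_cast le_top) |>.div hψ'.continuous hne)
  have hsupp₁ : HasCompactSupport g₁ := (hf₁c.mul_left).mul_right
  have hsupp₂ : HasCompactSupport g₂ := (hf₁c.deriv.mul_right).mul_right
  have hsupp₃ : HasCompactSupport g₃ := (hf₁c.mul_left).mul_right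
  have hi₁ : Integrable g₁ := hcont₁.integrable_of_hasCompactSupport hsupp₁
  have hi₂ : Integrable g₂ := hcont₂.integrable_of_hasCompactSupport hsupp₂
  have hi₃ : Integrable g₃ := hcont₃.integrable_of_hasCompactSupport hsupp₃
  -- the integral of deriv F over ℝ vanishes
  have hintF : Integrable (deriv F) := by
    rw [hderivF]; exact (hi₁.add hi₂).add hi₃
  have hzero : (∫ y, deriv F y) = 0 := by
    rw [← intervalIntegral.integral_Iic_add_Ioi (b := (0 : ℝ)) hintF.integrableOn hintF.integrableOn,
      hFc.integral_Iic_deriv_eq (hF.of_le (by exact_mod_cast le_top)) 0,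
      hFc.integral_Ioi_deriv_eq (hF.of_le (by exact_mod_cast le_top)) 0]
    ring
  have hsum : (∫ y, g₁ y) + (∫ y, g₂ y) + (∫ y, g₃ y) = 0 := by
    have e1 : (∫ y, g₁ y + g₂ y + g₃ y) = (∫ y, g₁ y + g₂ y) + ∫ y, g₃ y :=
      integral_add ((hi₁.add hi₂ : _) : Integrable fun y => g₁ y + g₂ y) hi₃
    have e2 : (∫ y, g₁ y + g₂ y) = (∫ y, g₁ y) + ∫ y, g₂ y := integral_add hi₁ hi₂
    have e0 : (∫ y, g₁ y + g₂ y + g₃ y) = 0 := by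
      rw [← hzero]; congr 1; exact hderivF.symm
    rw [e1, e2] at e0
    exact e0
  -- change of variables in the first integral
  have hcov : (∫ x, deriv f₀ x * f₁ (ψinv x) * Real.log (deriv ψ (ψinv x)))
      = ∫ y, g₁ y := by
    have himg : ψ '' Set.univ = Set.univ := by
      rw [Set.image_univ]; exact hright.surjective.range_eq
    rw [← setIntegral_univ, ← himg,
      integral_image_eq_integral_abs_deriv_smul MeasurableSet.univ
        (fun y _ => (hdψ y).hasDerivWithinAt) hleft.injective.injOn
        (fun x => deriv f₀ x * f₁ (ψinv x) * Real.log (deriv ψ (ψinv x))),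
      setIntegral_univ]
    congr 1
    funext y
    rw [hleft y, hg₁def, abs_of_pos (hpos y), smul_eq_mul]
    ring
  rw [hcov]
  linarith [hsum]
end
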